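/- Let g ∈ L²(ℝᵈ), b ∈ GL_d(ℝ), and let E(g,b) = {ω : g_b(ω) > 0} where g_b is the Grammian of g with respect to b. Define u_g(ω) = g(ω)/g_b(b⁻¹ω) for ω ∈ b·E(g,b) and u_g(ω) = 0 otherwise. Then (u_g)_b(ω) = 1 for almost every ω ∈ E(g,b). -/

import Mathlib

open MeasureTheory Filter
open scoped Classical
noncomputable section

/-- The Grammian of `g` with respect to the matrix `b`. -/
def gram2 {d : ℕ} (b : Matrix (Fin d) (Fin d) ℝ) (g : (Fin d → ℝ) → ℂ) (ω : Fin d → ℝ) : ℝ :=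
  Real.sqrt (|b.det| * ∑' s : Fin d → ℤ, ‖g (b.mulVec (ω + fun i => (s i : ℝ)))‖ ^ 2)

/-- `E(g,b) = {ω : g_b(ω) > 0}`. -/
def Egb {d : ℕ} (b : Matrix (Fin d) (Fin d) ℝ) (g : (Fin d → ℝ) → ℂ) : Set (Fin d → ℝ) :=
  {ω | 0 < gram2 b g ω}

/-- `u_g(ω) = g(ω)/g_b(b⁻¹ω)` for `ω ∈ b·E(g,b)`, and `0` otherwise. -/
def ug {d : ℕ} (b : Matrix (Fin d) (Fin d) ℝ) (g : (Fin d → ℝ) → ℂ) (ω : Fin d → ℝ) : ℂ :=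
  if ω ∈ b.mulVec '' Egb b g then g ω / (gram2 b g (b⁻¹.mulVec ω) : ℝ) else 0

lemma gram2_periodic {d : ℕ} (b : Matrix (Fin d) (Fin d) ℝ) (g : (Fin d → ℝ) → ℂ)
    (ω : Fin d → ℝ) (s : Fin d → ℤ) :
    gram2 b g (ω + fun i => (s i : ℝ)) = gram2 b g ω := by
  unfold gram2
  congr 2
  rw [← (Equiv.addLeft s).tsum_eq fun t => ‖g (b.mulVec (ω + fun i => (t i : ℝ)))‖ ^ 2]
  refine tsum_congr fun t => ?_
  have h : ((ω + fun i => (s i : ℝ)) + fun i => (t i : ℝ)) =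
      ω + fun i => (((Equiv.addLeft s) t) i : ℝ) := by
    funext i
    simp [Equiv.addLeft]
    push_cast
    ring
  rw [h]

/-- The Grammian of `u_g` equals 1 a.e. on `E(g,b)`. -/
theorem gram_ug_eq_one {d : ℕ} (g : (Fin d → ℝ) → ℂ)
    (hg : MemLp g 2 (volume : Measure (Fin d → ℝ)))
    (b : Matrix (Fin d) (Fin d) ℝ) (hb : IsUnit b) :
    ∀ᵐ ω ∂(volume : Measure (Fin d → ℝ)), ω ∈ Egb b g → gram2 b (ug b g) ω = 1 := by
  filter_upwards with ω hω
  have hdet : IsUnit b.det := (Matrix.isUnit_iff_isUnit_det b).mp hb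
  have hbinv : ∀ x : Fin d → ℝ, b⁻¹.mulVec (b.mulVec x) = x := by
    intro x
    rw [Matrix.mulVec_mulVec, Matrix.nonsing_inv_mul b hdet, Matrix.one_mulVec]
  set G : ℝ := gram2 b g ω with hGdef
  have hG : 0 < G := hω
  have key : ∀ s : Fin d → ℤ,
      ug b g (b.mulVec (ω + fun i => (s i : ℝ))) =
        g (b.mulVec (ω + fun i => (s i : ℝ))) / (G : ℂ) := by
    intro s
    have hmem : (ω + fun i => (s i : ℝ)) ∈ Egb b g := by
      simp only [Egb, Set.mem_setOf_eq, gram2_periodic]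
      exact hω
    rw [ug, if_pos ⟨_, hmem, rfl⟩, hbinv, gram2_periodic]
  have hnn : 0 ≤ |b.det| * ∑' s : Fin d → ℤ, ‖g (b.mulVec (ω + fun i => (s i : ℝ)))‖ ^ 2 :=
    mul_nonneg (abs_nonneg _) (tsum_nonneg fun s => sq_nonneg _)
  have hGsq : G ^ 2 = |b.det| * ∑' s : Fin d → ℤ, ‖g (b.mulVec (ω + fun i => (s i : ℝ)))‖ ^ 2 :=
    Real.sq_sqrt hnn
  rw [gram2]
  have hterm : ∀ s : Fin d → ℤ,
      ‖ug b g (b.mulVec (ω + fun i => (s i : ℝ)))‖ ^ 2 =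
        ‖g (b.mulVec (ω + fun i => (s i : ℝ)))‖ ^ 2 / G ^ 2 := by
    intro s
    rw [key, norm_div, Complex.norm_real, Real.norm_eq_abs, abs_of_pos hG, div_pow]
  have : (∑' s : Fin d → ℤ, ‖ug b g (b.mulVec (ω + fun i => (s i : ℝ)))‖ ^ 2) =
      (∑' s : Fin d → ℤ, ‖g (b.mulVec (ω + fun i => (s i : ℝ)))‖ ^ 2) / G ^ 2 := by
    simp_rw [hterm]
    exact tsum_div_const
  rw [this, mul_div_assoc', ← hGsq, div_self (by positivity), Real.sqrt_one]
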